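/- Fix λ > 0, γ ≥ 0, and p a probability distribution on ℝ^d with bounded support. Suppose W is a positive definite matrix with (1/2)I ⪯ E_{x∼p}[(W x xᵀ W)/(1+γ‖W x‖)] + λW ⪯ 2I, and let W* be the unique positive definite solution of the corresponding fixed-point equation E[(W x xᵀ W)/(1+γ‖W x‖)] + λW = I. Then (1/4)W² ⪯ (W*)² ⪯ 4W². -/

import Mathlib

open MeasureTheory Matrix
open scoped Classical

/-- Euclidean norm on `Fin d → ℝ`. -/
noncomputable def enorm' {d : ℕ} (v : Fin d → ℝ) : ℝ := Real.sqrt (∑ i, (v i)^2)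

/-- Euclidean inner product on `Fin d → ℝ`. -/
noncomputable def einner' {d : ℕ} (v w : Fin d → ℝ) : ℝ := ∑ i, v i * w i

/-- Operator (spectral) norm of a real matrix. -/
noncomputable def opNorm {d : ℕ} (M : Matrix (Fin d) (Fin d) ℝ) : ℝ :=
  ‖(Matrix.toEuclideanCLM (𝕜 := ℝ) M :
      EuclideanSpace ℝ (Fin d) →L[ℝ] EuclideanSpace ℝ (Fin d))‖

/-- Positive semidefinite square root (junk value `0` on non-PSD matrices). -/
noncomputable def psqrt {d : ℕ} (A : Matrix (Fin d) (Fin d) ℝ) : Matrix (Fin d) (Fin d) ℝ :=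
  if h : A.PosSemidef then
    h.1.eigenvectorUnitary.1 * diagonal ((↑) ∘ (√·) ∘ h.1.eigenvalues) *
      (star h.1.eigenvectorUnitary : Matrix (Fin d) (Fin d) ℝ)
  else 0

/-- Entrywise expectation of a matrix-valued function. -/
noncomputable def mExp {d : ℕ} (p : Measure (Fin d → ℝ))
    (f : (Fin d → ℝ) → Matrix (Fin d) (Fin d) ℝ) : Matrix (Fin d) (Fin d) ℝ :=
  Matrix.of fun i j => ∫ x, f x i j ∂p

/-- The LDP operator `F(U) = E[(U x xᵀ U)/‖U x‖ · 1{x ≠ 0}] + λ U`. -/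
noncomputable def FLDP {d : ℕ} (p : Measure (Fin d → ℝ)) (lam : ℝ)
    (U : Matrix (Fin d) (Fin d) ℝ) : Matrix (Fin d) (Fin d) ℝ :=
  mExp p (fun x => if x = 0 then 0
    else (enorm' (U.mulVec x))⁻¹ • vecMulVec (U.mulVec x) (U.mulVec x)) + lam • U

/-- The DP operator `G(W) = E[(W x xᵀ W)/(1 + γ‖W x‖)] + λ W`. -/
noncomputable def FJDP {d : ℕ} (p : Measure (Fin d → ℝ)) (γ lam : ℝ)
    (W : Matrix (Fin d) (Fin d) ℝ) : Matrix (Fin d) (Fin d) ℝ :=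
  mExp p (fun x => (1 + γ * enorm' (W.mulVec x))⁻¹ • vecMulVec (W.mulVec x) (W.mulVec x))
    + lam • W

/-- `sym(A) = (Aᵀ A)^{1/2}`. -/
noncomputable def symMat {d : ℕ} (A : Matrix (Fin d) (Fin d) ℝ) : Matrix (Fin d) (Fin d) ℝ :=
  psqrt (Aᵀ * A)

/-- Smallest eigenvalue of a Hermitian matrix (junk value `0` otherwise). -/
noncomputable def lmin {d : ℕ} (A : Matrix (Fin d) (Fin d) ℝ) : ℝ :=
  if h : A.IsHermitian then ⨅ i, h.eigenvalues i else 0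

/-- Largest eigenvalue of a Hermitian matrix (junk value `0` otherwise). -/
noncomputable def lmax {d : ℕ} (A : Matrix (Fin d) (Fin d) ℝ) : ℝ :=
  if h : A.IsHermitian then ⨆ i, h.eigenvalues i else 0


section eig
variable {d : ℕ}

lemma smul_one_sub_psd {M : Matrix (Fin d) (Fin d) ℝ} (hM : M.IsHermitian) (t : ℝ)
    (ht : ∀ i, hM.eigenvalues i ≤ t) : (t • (1 : Matrix (Fin d) (Fin d) ℝ) - M).PosSemidef := by
  classical
  set U : Matrix (Fin d) (Fin d) ℝ := (hM.eigenvectorUnitary : Matrix (Fin d) (Fin d) ℝ)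
  have hU : U * star U = 1 := (Matrix.mem_unitaryGroup_iff).mp hM.eigenvectorUnitary.2
  have h1 : t • (1 : Matrix (Fin d) (Fin d) ℝ) = U * (t • 1) * star U := by
    rw [Matrix.mul_smul, Matrix.smul_mul, mul_one, hU]
  have h2 : t • (1 : Matrix (Fin d) (Fin d) ℝ) - M
      = U * (diagonal (fun i => t - hM.eigenvalues i)) * star U := by
    conv_lhs => rw [h1, hM.spectral_theorem, Unitary.conjStarAlgAut_apply]
    rw [← Matrix.sub_mul, ← Matrix.mul_sub]
    congr 2
    have : t • (1 : Matrix (Fin d) (Fin d) ℝ) = diagonal (fun _ => t) := by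
      ext i j
      by_cases h : i = j <;> simp [Matrix.one_apply, Matrix.diagonal, h]
    rw [this, Matrix.diagonal_sub]
    congr 1
  have hpsd : (diagonal (fun i => t - hM.eigenvalues i)).PosSemidef :=
    Matrix.posSemidef_diagonal_iff.mpr fun i => sub_nonneg.mpr (ht i)
  have := hpsd.mul_mul_conjTranspose_same U
  rw [h2]
  simpa [Matrix.star_eq_conjTranspose] using this

lemma quad_le_of_eigen_le {M : Matrix (Fin d) (Fin d) ℝ} (hM : M.IsHermitian) (t : ℝ)
    (ht : ∀ i, hM.eigenvalues i ≤ t) (v : Fin d → ℝ) :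
    v ⬝ᵥ (M *ᵥ v) ≤ t * (v ⬝ᵥ v) := by
  have h := (smul_one_sub_psd hM t ht).dotProduct_mulVec_nonneg v
  simp only [star_trivial, Matrix.sub_mulVec, Matrix.smul_mulVec, Matrix.one_mulVec,
    dotProduct_sub, dotProduct_smul, smul_eq_mul] at h
  linarith

lemma exists_top_eigen (hd : 0 < d) {M : Matrix (Fin d) (Fin d) ℝ} (hM : M.IsHermitian) :
    ∃ (t : ℝ) (u : Fin d → ℝ), u ⬝ᵥ u = 1 ∧ M *ᵥ u = t • u ∧
      ∀ v : Fin d → ℝ, v ⬝ᵥ (M *ᵥ v) ≤ t * (v ⬝ᵥ v) := by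
  haveI : Nonempty (Fin d) := ⟨⟨0, hd⟩⟩
  obtain ⟨i0, hi0⟩ := Finite.exists_max hM.eigenvalues
  refine ⟨hM.eigenvalues i0, ⇑(hM.eigenvectorBasis i0), ?_, hM.mulVec_eigenvectorBasis i0,
    quad_le_of_eigen_le hM _ fun i => hi0 i⟩
  have h1 : ‖hM.eigenvectorBasis i0‖ = 1 := hM.eigenvectorBasis.orthonormal.1 i0
  have h2 : (inner ℝ (hM.eigenvectorBasis i0) (hM.eigenvectorBasis i0) : ℝ) = 1 := by
    rw [real_inner_self_eq_norm_sq, h1]; norm_num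
  rw [EuclideanSpace.inner_eq_star_dotProduct] at h2
  simpa using h2

end eig

section loewner
variable {d : ℕ}

lemma dot_nonneg (v : Fin d → ℝ) : 0 ≤ v ⬝ᵥ v :=
  Finset.sum_nonneg fun i _ => mul_self_nonneg _

lemma cs_dot (a b : Fin d → ℝ) : (a ⬝ᵥ b)^2 ≤ (a ⬝ᵥ a) * (b ⬝ᵥ b) := by
  have := Finset.sum_mul_sq_le_sq_mul_sq Finset.univ a b
  simpa [dotProduct, pow_two, mul_mul_mul_comm] using this

lemma psd_quad {M : Matrix (Fin d) (Fin d) ℝ} (hM : M.PosSemidef) (x : Fin d → ℝ) :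
    0 ≤ x ⬝ᵥ (M *ᵥ x) := by simpa using hM.dotProduct_mulVec_nonneg x

lemma pd_quad {M : Matrix (Fin d) (Fin d) ℝ} (hM : M.PosDef) {x : Fin d → ℝ} (hx : x ≠ 0) :
    0 < x ⬝ᵥ (M *ᵥ x) := by simpa using hM.dotProduct_mulVec_pos hx

lemma dot_mulVec_symm {M : Matrix (Fin d) (Fin d) ℝ} (hM : M.IsHermitian) (x y : Fin d → ℝ) :
    x ⬝ᵥ (M *ᵥ y) = (M *ᵥ x) ⬝ᵥ y := by
  rw [Matrix.dotProduct_mulVec]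
  congr 1
  have ht : Mᵀ = M := by
    have := hM.eq
    rwa [Matrix.conjTranspose_eq_transpose_of_trivial] at this
  conv_lhs => rw [← ht]
  rw [Matrix.vecMul_transpose]

lemma cs_psd {M : Matrix (Fin d) (Fin d) ℝ} (hM : M.PosSemidef) (x y : Fin d → ℝ) :
    (x ⬝ᵥ (M *ᵥ y))^2 ≤ (x ⬝ᵥ (M *ᵥ x)) * (y ⬝ᵥ (M *ᵥ y)) := by
  have key : ∀ t : ℝ, 0 ≤ (y ⬝ᵥ (M *ᵥ y)) * (t * t) + (2 * (x ⬝ᵥ (M *ᵥ y))) * t + (x ⬝ᵥ (M *ᵥ x)) := by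
    intro t
    have h0 := psd_quad hM (x + t • y)
    have e1 : (x + t • y) ⬝ᵥ (M *ᵥ (x + t • y))
        = (x ⬝ᵥ (M *ᵥ x)) + t * (x ⬝ᵥ (M *ᵥ y)) + t * (y ⬝ᵥ (M *ᵥ x)) + t^2 * (y ⬝ᵥ (M *ᵥ y)) := by
      rw [Matrix.mulVec_add, Matrix.mulVec_smul]
      simp [dotProduct_add, add_dotProduct, dotProduct_smul, smul_dotProduct, smul_eq_mul]
      ring
    have e2 : y ⬝ᵥ (M *ᵥ x) = x ⬝ᵥ (M *ᵥ y) := by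
      rw [dot_mulVec_symm hM.1 y x, dotProduct_comm]
    rw [e1, e2] at h0
    nlinarith [h0]
  have hd : discrim (y ⬝ᵥ (M *ᵥ y)) (2 * (x ⬝ᵥ (M *ᵥ y))) (x ⬝ᵥ (M *ᵥ x)) ≤ 0 :=
    discrim_le_zero key
  unfold discrim at hd
  nlinarith [hd]

lemma transpose_norm_bound {A : Matrix (Fin d) (Fin d) ℝ} {c : ℝ}
    (h : ∀ z, (A *ᵥ z) ⬝ᵥ (A *ᵥ z) ≤ c^2 * (z ⬝ᵥ z)) (z : Fin d → ℝ) :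
    (Aᵀ *ᵥ z) ⬝ᵥ (Aᵀ *ᵥ z) ≤ c^2 * (z ⬝ᵥ z) := by
  set y := Aᵀ *ᵥ z with hy
  have key : y ⬝ᵥ y = (A *ᵥ y) ⬝ᵥ z := by
    conv_lhs => rw [hy]
    rw [Matrix.dotProduct_mulVec, Matrix.vecMul_transpose]
  have h2 : ((A *ᵥ y) ⬝ᵥ z)^2 ≤ ((A *ᵥ y) ⬝ᵥ (A *ᵥ y)) * (z ⬝ᵥ z) := cs_dot _ _
  have h3 := h y
  rcases eq_or_lt_of_le (dot_nonneg y) with h4 | h4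
  · rw [← h4]; exact mul_nonneg (sq_nonneg c) (dot_nonneg z)
  · have h5 : (y ⬝ᵥ y)^2 ≤ (c^2 * (y ⬝ᵥ y)) * (z ⬝ᵥ z) := by
      conv_lhs => rw [key]
      nlinarith [h2, h3, dot_nonneg z]
    nlinarith [h4, h5]

lemma psd_of_dim_zero (hd : d = 0) (M : Matrix (Fin d) (Fin d) ℝ) : M.PosSemidef := by
  subst hd
  refine Matrix.PosSemidef.of_dotProduct_mulVec_nonneg ?_ fun x => ?_
  · ext i j; exact i.elim0
  · simp [dotProduct]

/-- sqrt-monotonicity substitute: if `‖Xz‖ ≤ ‖Yz‖` for all `z` and `Y` is PD, `X` Hermitian,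
then `X ⪯ Y`. -/
lemma loewner_of_norm_le {X Y : Matrix (Fin d) (Fin d) ℝ} (hX : X.IsHermitian) (hY : Y.PosDef)
    (h : ∀ z, (X *ᵥ z) ⬝ᵥ (X *ᵥ z) ≤ (Y *ᵥ z) ⬝ᵥ (Y *ᵥ z)) : (Y - X).PosSemidef := by
  rcases Nat.eq_zero_or_pos d with hd | hd
  · exact psd_of_dim_zero hd _
  obtain ⟨t, u, hu1, hu2, hu3⟩ := exists_top_eigen hd (hX.sub hY.isHermitian)
  have herm : (Y - X).IsHermitian := hY.isHermitian.sub hX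
  rcases le_or_gt t 0 with ht | ht
  · refine Matrix.PosSemidef.of_dotProduct_mulVec_nonneg herm fun v => ?_
    have h3 := hu3 v
    have : v ⬝ᵥ ((X - Y) *ᵥ v) = v ⬝ᵥ (X *ᵥ v) - v ⬝ᵥ (Y *ᵥ v) := by
      rw [Matrix.sub_mulVec, dotProduct_sub]
    rw [this] at h3
    have hv : v ⬝ᵥ ((Y - X) *ᵥ v) = v ⬝ᵥ (Y *ᵥ v) - v ⬝ᵥ (X *ᵥ v) := by
      rw [Matrix.sub_mulVec, dotProduct_sub]
    have hvv := dot_nonneg v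
    simp only [star_trivial]
    rw [hv]
    nlinarith [mul_nonpos_of_nonpos_of_nonneg ht hvv]
  · exfalso
    have hu0 : u ≠ 0 := by
      intro h0; rw [h0] at hu1; simp at hu1
    have hXu : X *ᵥ u = Y *ᵥ u + t • u := by
      have : (X - Y) *ᵥ u = X *ᵥ u - Y *ᵥ u := Matrix.sub_mulVec _ _ _
      rw [this] at hu2
      linear_combination (norm := module) hu2
    have hpos : 0 < u ⬝ᵥ (Y *ᵥ u) := pd_quad hY hu0
    have hexp : (X *ᵥ u) ⬝ᵥ (X *ᵥ u)
        = (Y *ᵥ u) ⬝ᵥ (Y *ᵥ u) + 2 * t * (u ⬝ᵥ (Y *ᵥ u)) + t^2 * (u ⬝ᵥ u) := by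
      rw [hXu]
      simp [dotProduct_add, add_dotProduct, dotProduct_smul, smul_dotProduct, smul_eq_mul]
      rw [dotProduct_comm ((Y *ᵥ u)) u]
      ring
    have := h u
    rw [hexp, hu1] at this
    nlinarith

/-- inverse antitonicity for PD matrices. -/
lemma inv_antitone {X Y : Matrix (Fin d) (Fin d) ℝ} (hX : X.PosDef) (hY : Y.PosDef)
    (h : (Y - X).PosSemidef) : (X⁻¹ - Y⁻¹).PosSemidef := by
  have hXd : IsUnit X.det := hX.det_pos.ne'.isUnit
  have hYd : IsUnit Y.det := hY.det_pos.ne'.isUnit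
  refine Matrix.PosSemidef.of_dotProduct_mulVec_nonneg (hX.isHermitian.inv.sub hY.isHermitian.inv) fun z => ?_
  simp only [star_trivial]
  set y := Y⁻¹ *ᵥ z with hy
  have hYy : Y *ᵥ y = z := by
    rw [hy, Matrix.mulVec_mulVec, Matrix.mul_nonsing_inv _ hYd, Matrix.one_mulVec]
  have hXz : X *ᵥ (X⁻¹ *ᵥ z) = z := by
    rw [Matrix.mulVec_mulVec, Matrix.mul_nonsing_inv _ hXd, Matrix.one_mulVec]
  have cs := cs_psd hX.posSemidef y (X⁻¹ *ᵥ z)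
  rw [hXz] at cs
  have e1 : (X⁻¹ *ᵥ z) ⬝ᵥ z = z ⬝ᵥ (X⁻¹ *ᵥ z) := dotProduct_comm _ _
  have e2 : y ⬝ᵥ z = z ⬝ᵥ y := dotProduct_comm _ _
  have hXY : y ⬝ᵥ (X *ᵥ y) ≤ z ⬝ᵥ y := by
    have h0 := psd_quad h y
    have : y ⬝ᵥ ((Y - X) *ᵥ y) = y ⬝ᵥ (Y *ᵥ y) - y ⬝ᵥ (X *ᵥ y) := by
      rw [Matrix.sub_mulVec, dotProduct_sub]
    rw [this, hYy, e2] at h0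
    linarith
  have hr : 0 ≤ z ⬝ᵥ y := by
    have := psd_quad hY.inv.posSemidef z
    rwa [← hy] at this
  have hs : 0 ≤ z ⬝ᵥ (X⁻¹ *ᵥ z) := psd_quad hX.inv.posSemidef z
  have hXy0 : 0 ≤ y ⬝ᵥ (X *ᵥ y) := psd_quad hX.posSemidef y
  have goal' : z ⬝ᵥ ((X⁻¹ - Y⁻¹) *ᵥ z) = z ⬝ᵥ (X⁻¹ *ᵥ z) - z ⬝ᵥ y := by
    rw [Matrix.sub_mulVec, dotProduct_sub, ← hy]
  rw [goal']
  rcases eq_or_lt_of_le hr with h4 | h4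
  · linarith
  · have cs2 : (z ⬝ᵥ y)^2 ≤ (y ⬝ᵥ (X *ᵥ y)) * (z ⬝ᵥ (X⁻¹ *ᵥ z)) := by
      rw [← e2, ← e1]; exact cs
    have key : (z ⬝ᵥ y)^2 ≤ (z ⬝ᵥ y) * (z ⬝ᵥ (X⁻¹ *ᵥ z)) :=
      le_trans cs2 (mul_le_mul_of_nonneg_right hXY hs)
    nlinarith

end loewner
section meas
variable {d : ℕ}

lemma dot_nonneg' (v : Fin d → ℝ) : 0 ≤ v ⬝ᵥ v :=
  Finset.sum_nonneg fun i _ => mul_self_nonneg _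

lemma cs_dot' (a b : Fin d → ℝ) : (a ⬝ᵥ b)^2 ≤ (a ⬝ᵥ a) * (b ⬝ᵥ b) := by
  have := Finset.sum_mul_sq_le_sq_mul_sq Finset.univ a b
  simpa [dotProduct, pow_two, mul_mul_mul_comm] using this

lemma enorm'_eq (v : Fin d → ℝ) : enorm' v = Real.sqrt (v ⬝ᵥ v) := by
  simp [enorm', dotProduct, pow_two]

lemma enorm'_nonneg (v : Fin d → ℝ) : 0 ≤ enorm' v := Real.sqrt_nonneg _

lemma enorm'_mul_self (v : Fin d → ℝ) : enorm' v * enorm' v = v ⬝ᵥ v := by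
  rw [enorm'_eq]; exact Real.mul_self_sqrt (dot_nonneg' v)

lemma den_pos {γ : ℝ} (hγ : 0 ≤ γ) (v : Fin d → ℝ) : 0 < 1 + γ * enorm' v := by
  nlinarith [enorm'_nonneg v]

/-- Frobenius-type bound. -/
lemma mulVec_dot_le (M : Matrix (Fin d) (Fin d) ℝ) (x : Fin d → ℝ) :
    (M *ᵥ x) ⬝ᵥ (M *ᵥ x) ≤ (∑ i, ∑ j, (M i j)^2) * (x ⬝ᵥ x) := by
  have h : ∀ i, (M *ᵥ x) i * (M *ᵥ x) i ≤ (∑ j, (M i j)^2) * (x ⬝ᵥ x) := by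
    intro i
    have := Finset.sum_mul_sq_le_sq_mul_sq Finset.univ (fun j => M i j) x
    have e : (M *ᵥ x) i = ∑ j, M i j * x j := rfl
    rw [e, ← pow_two]
    calc (∑ j, M i j * x j)^2 ≤ (∑ j, (M i j)^2) * (∑ j, (x j)^2) := this
      _ = (∑ j, (M i j)^2) * (x ⬝ᵥ x) := by congr 1; simp [dotProduct, pow_two]
  calc (M *ᵥ x) ⬝ᵥ (M *ᵥ x) = ∑ i, (M *ᵥ x) i * (M *ᵥ x) i := rfl
    _ ≤ ∑ i, (∑ j, (M i j)^2) * (x ⬝ᵥ x) := Finset.sum_le_sum fun i _ => h i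
    _ = (∑ i, ∑ j, (M i j)^2) * (x ⬝ᵥ x) := by rw [Finset.sum_mul]

lemma cont_mulVec (M : Matrix (Fin d) (Fin d) ℝ) : Continuous fun x : Fin d → ℝ => M *ᵥ x := by
  apply continuous_pi
  intro i
  simp only [Matrix.mulVec, dotProduct]
  exact continuous_finset_sum _ fun j _ => continuous_const.mul (continuous_apply j)

lemma cont_enorm' : Continuous fun v : Fin d → ℝ => enorm' v := by
  unfold enorm'
  exact Real.continuous_sqrt.comp (continuous_finset_sum _ fun i _ => (continuous_apply i).pow 2)

lemma cont_den {γ : ℝ} (hγ : 0 ≤ γ) (M : Matrix (Fin d) (Fin d) ℝ) :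
    Continuous fun x : Fin d → ℝ => (1 + γ * enorm' (M *ᵥ x))⁻¹ := by
  apply Continuous.inv₀
  · exact (continuous_const.add (continuous_const.mul (cont_enorm'.comp (cont_mulVec M))))
  · exact fun x => ne_of_gt (den_pos hγ _)

lemma den_inv_le_one {γ : ℝ} (hγ : 0 ≤ γ) (v : Fin d → ℝ) :
    (1 + γ * enorm' v)⁻¹ ≤ 1 := by
  rw [inv_le_one_iff₀]
  right
  nlinarith [enorm'_nonneg v]

lemma den_inv_nonneg {γ : ℝ} (hγ : 0 ≤ γ) (v : Fin d → ℝ) :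
    0 ≤ (1 + γ * enorm' v)⁻¹ := le_of_lt (inv_pos.mpr (den_pos hγ v))

/-- integrability of the quadratic-form integrand. -/
lemma integ_psi (p : Measure (Fin d → ℝ)) [IsProbabilityMeasure p]
    (hbdd : ∃ R : ℝ, ∀ᵐ x ∂p, enorm' x ≤ R) {γ : ℝ} (hγ : 0 ≤ γ)
    (M : Matrix (Fin d) (Fin d) ℝ) (v : Fin d → ℝ) :
    Integrable (fun x => (1 + γ * enorm' (M *ᵥ x))⁻¹ * (v ⬝ᵥ (M *ᵥ x))^2) p := by
  obtain ⟨R, hR⟩ := hbdd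
  set F : ℝ := ∑ i, ∑ j, (M i j)^2 with hF
  have hF0 : 0 ≤ F := Finset.sum_nonneg fun i _ => Finset.sum_nonneg fun j _ => sq_nonneg _
  apply Integrable.mono' (g := fun _ => (v ⬝ᵥ v) * (F * (max R 0)^2)) (integrable_const _)
  · apply Continuous.aestronglyMeasurable
    exact (cont_den hγ M).mul ((continuous_finset_sum _ fun j _ =>
      (continuous_const.mul ((continuous_apply j).comp (cont_mulVec M)))).pow 2)
  · filter_upwards [hR] with x hx
    have h1 : (v ⬝ᵥ (M *ᵥ x))^2 ≤ (v ⬝ᵥ v) * ((M *ᵥ x) ⬝ᵥ (M *ᵥ x)) := cs_dot' _ _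
    have h2 : (M *ᵥ x) ⬝ᵥ (M *ᵥ x) ≤ F * (x ⬝ᵥ x) := mulVec_dot_le M x
    have h3 : x ⬝ᵥ x ≤ (max R 0)^2 := by
      have := enorm'_mul_self x
      nlinarith [enorm'_nonneg x, le_max_right R 0, le_trans hx (le_max_left R 0)]
    have h4 : 0 ≤ (v ⬝ᵥ (M *ᵥ x))^2 := sq_nonneg _
    rw [Real.norm_eq_abs, abs_mul, abs_of_nonneg (den_inv_nonneg hγ _), abs_of_nonneg h4]
    calc (1 + γ * enorm' (M *ᵥ x))⁻¹ * (v ⬝ᵥ (M *ᵥ x))^2 ≤ 1 * (v ⬝ᵥ (M *ᵥ x))^2 :=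
          mul_le_mul_of_nonneg_right (den_inv_le_one hγ _) h4
      _ = (v ⬝ᵥ (M *ᵥ x))^2 := one_mul _
      _ ≤ (v ⬝ᵥ v) * (F * (x ⬝ᵥ x)) :=
          le_trans h1 (mul_le_mul_of_nonneg_left h2 (dot_nonneg' v))
      _ ≤ (v ⬝ᵥ v) * (F * (max R 0)^2) := by
          apply mul_le_mul_of_nonneg_left _ (dot_nonneg' v)
          exact mul_le_mul_of_nonneg_left h3 hF0

/-- integrability of matrix entries of the integrand. -/
lemma integ_entry (p : Measure (Fin d → ℝ)) [IsProbabilityMeasure p]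
    (hbdd : ∃ R : ℝ, ∀ᵐ x ∂p, enorm' x ≤ R) {γ : ℝ} (hγ : 0 ≤ γ)
    (M : Matrix (Fin d) (Fin d) ℝ) (i j : Fin d) :
    Integrable (fun x => (1 + γ * enorm' (M *ᵥ x))⁻¹ * ((M *ᵥ x) i * (M *ᵥ x) j)) p := by
  obtain ⟨R, hR⟩ := hbdd
  set F : ℝ := ∑ i, ∑ j, (M i j)^2 with hF
  have hF0 : 0 ≤ F := Finset.sum_nonneg fun i _ => Finset.sum_nonneg fun j _ => sq_nonneg _
  apply Integrable.mono' (g := fun _ => F * (max R 0)^2) (integrable_const _)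
  · apply Continuous.aestronglyMeasurable
    exact (cont_den hγ M).mul (((continuous_apply i).comp (cont_mulVec M)).mul
      ((continuous_apply j).comp (cont_mulVec M)))
  · filter_upwards [hR] with x hx
    have hd : ∀ k, ((M *ᵥ x) k)^2 ≤ (M *ᵥ x) ⬝ᵥ (M *ᵥ x) := by
      intro k
      have : ((M *ᵥ x) k)^2 = (M *ᵥ x) k * (M *ᵥ x) k := sq _
      rw [this]
      exact Finset.single_le_sum (f := fun k => (M *ᵥ x) k * (M *ᵥ x) k)
        (fun k _ => mul_self_nonneg _) (Finset.mem_univ k)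
    have h2 : (M *ᵥ x) ⬝ᵥ (M *ᵥ x) ≤ F * (x ⬝ᵥ x) := mulVec_dot_le M x
    have h3 : x ⬝ᵥ x ≤ (max R 0)^2 := by
      have := enorm'_mul_self x
      nlinarith [enorm'_nonneg x, le_max_right R 0, le_trans hx (le_max_left R 0)]
    have habs : |(M *ᵥ x) i * (M *ᵥ x) j| ≤ (M *ᵥ x) ⬝ᵥ (M *ᵥ x) := by
      rw [abs_mul]
      nlinarith [hd i, hd j, abs_nonneg ((M *ᵥ x) i), abs_nonneg ((M *ᵥ x) j),
        sq_abs ((M *ᵥ x) i), sq_abs ((M *ᵥ x) j)]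
    rw [Real.norm_eq_abs, abs_mul, abs_of_nonneg (den_inv_nonneg hγ _)]
    calc (1 + γ * enorm' (M *ᵥ x))⁻¹ * |(M *ᵥ x) i * (M *ᵥ x) j|
        ≤ 1 * |(M *ᵥ x) i * (M *ᵥ x) j| :=
          mul_le_mul_of_nonneg_right (den_inv_le_one hγ _) (abs_nonneg _)
      _ ≤ (M *ᵥ x) ⬝ᵥ (M *ᵥ x) := by rw [one_mul]; exact habs
      _ ≤ F * (max R 0)^2 := le_trans h2 (mul_le_mul_of_nonneg_left h3 hF0)

/-- quadratic form of FJDP. -/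
lemma FJDP_quad (p : Measure (Fin d → ℝ)) [IsProbabilityMeasure p]
    (hbdd : ∃ R : ℝ, ∀ᵐ x ∂p, enorm' x ≤ R) {γ : ℝ} (lam : ℝ) (hγ : 0 ≤ γ)
    (M : Matrix (Fin d) (Fin d) ℝ) (v : Fin d → ℝ) :
    v ⬝ᵥ ((FJDP p γ lam M) *ᵥ v)
      = (∫ x, (1 + γ * enorm' (M *ᵥ x))⁻¹ * (v ⬝ᵥ (M *ᵥ x))^2 ∂p)
        + lam * (v ⬝ᵥ (M *ᵥ v)) := by
  have hsplit : v ⬝ᵥ ((FJDP p γ lam M) *ᵥ v)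
      = v ⬝ᵥ ((mExp p (fun x => (1 + γ * enorm' (M *ᵥ x))⁻¹ • vecMulVec (M *ᵥ x) (M *ᵥ x))) *ᵥ v)
        + lam * (v ⬝ᵥ (M *ᵥ v)) := by
    unfold FJDP
    rw [Matrix.add_mulVec, dotProduct_add, Matrix.smul_mulVec, dotProduct_smul,
      smul_eq_mul]
  rw [hsplit]
  congr 1
  have hint : ∀ i j : Fin d,
      Integrable (fun x => (1 + γ * enorm' (M *ᵥ x))⁻¹ * ((M *ᵥ x) i * (M *ᵥ x) j)) p :=
    integ_entry p hbdd hγ M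
  have e1 : v ⬝ᵥ ((mExp p (fun x => (1 + γ * enorm' (M *ᵥ x))⁻¹ • vecMulVec (M *ᵥ x) (M *ᵥ x))) *ᵥ v)
      = ∑ i, ∑ j, v i * ((∫ x, (1 + γ * enorm' (M *ᵥ x))⁻¹ * ((M *ᵥ x) i * (M *ᵥ x) j) ∂p) * v j) := by
    simp only [dotProduct, Matrix.mulVec, mExp, Matrix.of_apply, Matrix.smul_apply,
      Matrix.vecMulVec_apply, smul_eq_mul, Finset.mul_sum]
  rw [e1]
  have e2 : ∀ i j : Fin d, v i * ((∫ x, (1 + γ * enorm' (M *ᵥ x))⁻¹ * ((M *ᵥ x) i * (M *ᵥ x) j) ∂p) * v j)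
      = ∫ x, v i * (((1 + γ * enorm' (M *ᵥ x))⁻¹ * ((M *ᵥ x) i * (M *ᵥ x) j)) * v j) ∂p := by
    intro i j
    rw [← integral_mul_const, ← integral_const_mul]
  have e3 : ∀ i j : Fin d, Integrable
      (fun x => v i * (((1 + γ * enorm' (M *ᵥ x))⁻¹ * ((M *ᵥ x) i * (M *ᵥ x) j)) * v j)) p := by
    intro i j
    exact (((hint i j).mul_const (v j)).const_mul (v i))
  calc ∑ i, ∑ j, v i * ((∫ x, (1 + γ * enorm' (M *ᵥ x))⁻¹ * ((M *ᵥ x) i * (M *ᵥ x) j) ∂p) * v j)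
      = ∑ i, ∑ j, ∫ x, v i * (((1 + γ * enorm' (M *ᵥ x))⁻¹ * ((M *ᵥ x) i * (M *ᵥ x) j)) * v j) ∂p := by
        exact Finset.sum_congr rfl fun i _ => Finset.sum_congr rfl fun j _ => e2 i j
    _ = ∑ i, ∫ x, ∑ j, v i * (((1 + γ * enorm' (M *ᵥ x))⁻¹ * ((M *ᵥ x) i * (M *ᵥ x) j)) * v j) ∂p := by
        exact Finset.sum_congr rfl fun i _ => (integral_finset_sum _ (fun j _ => e3 i j)).symm
    _ = ∫ x, ∑ i, ∑ j, v i * (((1 + γ * enorm' (M *ᵥ x))⁻¹ * ((M *ᵥ x) i * (M *ᵥ x) j)) * v j) ∂p := by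
        refine (integral_finset_sum _ (fun i _ => ?_)).symm
        exact integrable_finset_sum _ (fun j _ => e3 i j)
    _ = ∫ x, (1 + γ * enorm' (M *ᵥ x))⁻¹ * (v ⬝ᵥ (M *ᵥ x))^2 ∂p := by
        apply integral_congr_ae
        filter_upwards with x
        have hps : (v ⬝ᵥ (M *ᵥ x))^2 = ∑ i, ∑ j, (v i * (M *ᵥ x) i) * (v j * (M *ᵥ x) j) := by
          rw [pow_two, dotProduct, Finset.sum_mul_sum]
        rw [hps, Finset.mul_sum]
        refine Finset.sum_congr rfl fun i _ => ?_
        rw [Finset.mul_sum]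
        refine Finset.sum_congr rfl fun j _ => ?_
        ring

end meas

section keylemma
variable {d : ℕ}

lemma posdef_smul {σ : ℝ} (hσ : 0 < σ) {Y : Matrix (Fin d) (Fin d) ℝ} (hY : Y.PosDef) :
    (σ • Y).PosDef := by
  refine Matrix.PosDef.of_dotProduct_mulVec_pos ?_ ?_
  · have h := hY.isHermitian
    unfold Matrix.IsHermitian at *
    rw [Matrix.conjTranspose_smul, h]
    congr 1
  · intro z hz
    have h2 := hY.dotProduct_mulVec_pos hz
    simp only [star_trivial] at h2 ⊢
    rw [Matrix.smul_mulVec, dotProduct_smul, smul_eq_mul]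
    exact mul_pos hσ h2

lemma dotT (A : Matrix (Fin d) (Fin d) ℝ) (z w : Fin d → ℝ) :
    z ⬝ᵥ (A *ᵥ w) = (Aᵀ *ᵥ z) ⬝ᵥ w := by
  rw [Matrix.dotProduct_mulVec]
  congr 1
  exact (Matrix.mulVec_transpose A z).symm

lemma transpose_eq_self {X : Matrix (Fin d) (Fin d) ℝ} (hX : X.IsHermitian) : Xᵀ = X := by
  have := hX.eq; rwa [Matrix.conjTranspose_eq_transpose_of_trivial] at this

lemma enorm'_smul (c : ℝ) (v : Fin d → ℝ) : enorm' (c • v) = |c| * enorm' v := by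
  rw [enorm'_eq, enorm'_eq]
  have : (c • v) ⬝ᵥ (c • v) = c^2 * (v ⬝ᵥ v) := by
    rw [smul_dotProduct, dotProduct_smul, smul_eq_mul, smul_eq_mul]; ring
  rw [this, Real.sqrt_mul (sq_nonneg c), Real.sqrt_sq_eq_abs]

/-- **Key comparison lemma**. -/
lemma key (p : Measure (Fin d → ℝ)) [IsProbabilityMeasure p]
    (hbdd : ∃ R : ℝ, ∀ᵐ x ∂p, enorm' x ≤ R)
    {γ lam : ℝ} (hlam : 0 < lam) (hγ : 0 ≤ γ)
    {X Y : Matrix (Fin d) (Fin d) ℝ} (hX : X.PosDef) (hY : Y.PosDef)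
    (hXle : ∀ v : Fin d → ℝ,
      (∫ x, (1 + γ * enorm' (X *ᵥ x))⁻¹ * (v ⬝ᵥ (X *ᵥ x))^2 ∂p) + lam * (v ⬝ᵥ (X *ᵥ v)) ≤ v ⬝ᵥ v)
    (hYge : ∀ v : Fin d → ℝ,
      v ⬝ᵥ v ≤ (∫ x, (1 + γ * enorm' (Y *ᵥ x))⁻¹ * (v ⬝ᵥ (Y *ᵥ x))^2 ∂p) + lam * (v ⬝ᵥ (Y *ᵥ v))) :
    (Y^2 - X^2).PosSemidef := by
  rcases Nat.eq_zero_or_pos d with hd | hd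
  · exact psd_of_dim_zero hd _
  have hXdet : IsUnit X.det := hX.det_pos.ne'.isUnit
  have hYdet : IsUnit Y.det := hY.det_pos.ne'.isUnit
  set A : Matrix (Fin d) (Fin d) ℝ := X * Y⁻¹ with hA
  have hAT : Aᵀ = Y⁻¹ * X := by
    rw [hA, Matrix.transpose_mul, Matrix.transpose_nonsing_inv,
      transpose_eq_self hX.isHermitian, transpose_eq_self hY.isHermitian]
  have hermS : (A * Aᵀ).IsHermitian := by
    have := Matrix.isHermitian_mul_conjTranspose_self A
    rwa [Matrix.conjTranspose_eq_transpose_of_trivial] at this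
  obtain ⟨t, u, hu1, hu2, hu3⟩ := exists_top_eigen hd hermS
  have hquadS : ∀ z : Fin d → ℝ, z ⬝ᵥ ((A * Aᵀ) *ᵥ z) = (Aᵀ *ᵥ z) ⬝ᵥ (Aᵀ *ᵥ z) := by
    intro z
    rw [← Matrix.mulVec_mulVec, dotT]
  have htu : u ⬝ᵥ ((A * Aᵀ) *ᵥ u) = t := by
    rw [hu2, dotProduct_smul, smul_eq_mul, hu1, mul_one]
  have ht0 : 0 ≤ t := by
    rw [← htu, hquadS]; exact dot_nonneg _
  set σ : ℝ := Real.sqrt t with hσdef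
  have hσ0 : 0 ≤ σ := Real.sqrt_nonneg _
  have hσ2 : σ * σ = t := Real.mul_self_sqrt ht0
  -- operator norm bounds
  have bound_AT : ∀ z : Fin d → ℝ, (Aᵀ *ᵥ z) ⬝ᵥ (Aᵀ *ᵥ z) ≤ σ^2 * (z ⬝ᵥ z) := by
    intro z
    rw [← hquadS]
    have := hu3 z
    rw [pow_two, hσ2]
    exact this
  have bound_A : ∀ z : Fin d → ℝ, (A *ᵥ z) ⬝ᵥ (A *ᵥ z) ≤ σ^2 * (z ⬝ᵥ z) := by
    intro z
    have := transpose_norm_bound (A := Aᵀ) bound_AT z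
    rwa [Matrix.transpose_transpose] at this
  have bound_XY : ∀ z : Fin d → ℝ,
      (X *ᵥ z) ⬝ᵥ (X *ᵥ z) ≤ t * ((Y *ᵥ z) ⬝ᵥ (Y *ᵥ z)) := by
    intro z
    have hXz : A *ᵥ (Y *ᵥ z) = X *ᵥ z := by
      rw [Matrix.mulVec_mulVec, hA, Matrix.mul_assoc, Matrix.nonsing_inv_mul _ hYdet,
        Matrix.mul_one]
    have := bound_A (Y *ᵥ z)
    rw [hXz, pow_two, hσ2] at this
    exact this
  rcases le_or_gt t 1 with htle | htgt
  · -- easy case : `t ≤ 1`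
    refine Matrix.PosSemidef.of_dotProduct_mulVec_nonneg ((hY.isHermitian.pow 2).sub (hX.isHermitian.pow 2)) fun z => ?_
    simp only [star_trivial]
    have e : z ⬝ᵥ ((Y^2 - X^2) *ᵥ z)
        = (Y *ᵥ z) ⬝ᵥ (Y *ᵥ z) - (X *ᵥ z) ⬝ᵥ (X *ᵥ z) := by
      rw [Matrix.sub_mulVec, dotProduct_sub]
      congr 1
      · rw [pow_two, ← Matrix.mulVec_mulVec, dot_mulVec_symm hY.isHermitian]
      · rw [pow_two, ← Matrix.mulVec_mulVec, dot_mulVec_symm hX.isHermitian]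
    rw [e]
    have h1 := bound_XY z
    nlinarith [dot_nonneg (Y *ᵥ z)]
  · -- hard case : `t > 1`, derive a contradiction
    exfalso
    have hσ1 : 1 < σ := by nlinarith
    have hσpos : 0 < σ := lt_trans one_pos hσ1
    have hσne : σ ≠ 0 := ne_of_gt hσpos
    have htne : t ≠ 0 := by positivity
    set z0 : Fin d → ℝ := X *ᵥ u with hz0
    set w : Fin d → ℝ := σ⁻¹ • (Y⁻¹ *ᵥ z0) with hw
    have hATu : Aᵀ *ᵥ u = Y⁻¹ *ᵥ z0 := by
      rw [hAT, ← Matrix.mulVec_mulVec]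
    have f2 : (Y⁻¹ *ᵥ z0) ⬝ᵥ (Y⁻¹ *ᵥ z0) = t := by
      rw [← hATu, ← hquadS, htu]
    have hw1 : w ⬝ᵥ w = 1 := by
      rw [hw, smul_dotProduct, dotProduct_smul, smul_eq_mul, smul_eq_mul, f2, ← hσ2]
      field_simp
    have hYw : Y *ᵥ w = σ⁻¹ • z0 := by
      rw [hw, Matrix.mulVec_smul, Matrix.mulVec_mulVec, Matrix.mul_nonsing_inv _ hYdet,
        Matrix.one_mulVec]
    have hXu : X *ᵥ u = σ • (Y *ᵥ w) := by
      rw [hYw, smul_smul, mul_inv_cancel₀ hσne, one_smul, hz0]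
    -- Loewner step : Y⁻¹ ⪯ σ • X⁻¹
    have hsY : (σ • Y).PosDef := posdef_smul hσpos hY
    have hpsd1 : ((σ • Y) - X).PosSemidef := by
      apply loewner_of_norm_le hX.isHermitian hsY
      intro z
      have h1 := bound_XY z
      have e : ((σ • Y) *ᵥ z) ⬝ᵥ ((σ • Y) *ᵥ z) = t * ((Y *ᵥ z) ⬝ᵥ (Y *ᵥ z)) := by
        rw [Matrix.smul_mulVec, smul_dotProduct, dotProduct_smul, smul_eq_mul,
          smul_eq_mul, ← mul_assoc, hσ2]
      rw [e]
      exact h1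
    have hpsd2 : (X⁻¹ - (σ • Y)⁻¹).PosSemidef := inv_antitone hX hsY hpsd1
    have hinv : (σ • Y)⁻¹ = σ⁻¹ • Y⁻¹ := by
      apply Matrix.inv_eq_left_inv
      rw [Matrix.smul_mul, Matrix.mul_smul, smul_smul, inv_mul_cancel₀ hσne,
        Matrix.nonsing_inv_mul _ hYdet, one_smul]
    -- step (3) : wᵀ Y w ≤ uᵀ Y w
    have hXinvz0 : X⁻¹ *ᵥ z0 = u := by
      rw [hz0, Matrix.mulVec_mulVec, Matrix.nonsing_inv_mul _ hXdet, Matrix.one_mulVec]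
    have hq := psd_quad hpsd2 z0
    have hq' : σ⁻¹ * ((Y⁻¹ *ᵥ z0) ⬝ᵥ z0) ≤ u ⬝ᵥ z0 := by
      have e : z0 ⬝ᵥ ((X⁻¹ - (σ • Y)⁻¹) *ᵥ z0)
          = z0 ⬝ᵥ u - σ⁻¹ * (z0 ⬝ᵥ (Y⁻¹ *ᵥ z0)) := by
        rw [Matrix.sub_mulVec, dotProduct_sub, hXinvz0, hinv, Matrix.smul_mulVec,
          dotProduct_smul, smul_eq_mul]
      rw [e] at hq
      rw [dotProduct_comm (Y⁻¹ *ᵥ z0) z0, dotProduct_comm u z0]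
      linarith
    have step3 : w ⬝ᵥ (Y *ᵥ w) ≤ u ⬝ᵥ (Y *ᵥ w) := by
      have e1 : w ⬝ᵥ (Y *ᵥ w) = σ⁻¹ * (σ⁻¹ * ((Y⁻¹ *ᵥ z0) ⬝ᵥ z0)) := by
        rw [hYw, hw, smul_dotProduct, dotProduct_smul, smul_eq_mul, smul_eq_mul]
      have e2 : u ⬝ᵥ (Y *ᵥ w) = σ⁻¹ * (u ⬝ᵥ z0) := by
        rw [hYw, dotProduct_smul, smul_eq_mul]
      rw [e1, e2]
      have := mul_le_mul_of_nonneg_left hq' (le_of_lt (inv_pos.mpr hσpos))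
      exact this
    -- denominators
    have hnorm : ∀ x : Fin d → ℝ, enorm' (X *ᵥ x) ≤ σ * enorm' (Y *ᵥ x) := by
      intro x
      have h1 := bound_XY x
      have e1 := enorm'_mul_self (X *ᵥ x)
      have e2 := enorm'_mul_self (Y *ᵥ x)
      nlinarith [enorm'_nonneg (X *ᵥ x), enorm'_nonneg (Y *ᵥ x),
        mul_nonneg hσ0 (enorm'_nonneg (Y *ᵥ x))]
    have hden : ∀ x : Fin d → ℝ,
        1 + γ * enorm' (X *ᵥ x) ≤ σ * (1 + γ * enorm' (Y *ᵥ x)) := by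
      intro x
      have h1 := hnorm x
      nlinarith [enorm'_nonneg (Y *ᵥ x), mul_le_mul_of_nonneg_left h1 hγ]
    -- pointwise comparison of integrands
    have point : ∀ x : Fin d → ℝ,
        σ * ((1 + γ * enorm' (Y *ᵥ x))⁻¹ * (w ⬝ᵥ (Y *ᵥ x))^2)
          ≤ (1 + γ * enorm' (X *ᵥ x))⁻¹ * (u ⬝ᵥ (X *ᵥ x))^2 := by
      intro x
      have hd1 : 0 < 1 + γ * enorm' (X *ᵥ x) := den_pos hγ _
      have hd2 : 0 < 1 + γ * enorm' (Y *ᵥ x) := den_pos hγ _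
      have hnum : u ⬝ᵥ (X *ᵥ x) = σ * (w ⬝ᵥ (Y *ᵥ x)) := by
        rw [dot_mulVec_symm hX.isHermitian, hXu, smul_dotProduct, smul_eq_mul,
          ← dot_mulVec_symm hY.isHermitian]
      rw [hnum, mul_pow]
      set q : ℝ := (w ⬝ᵥ (Y *ᵥ x))^2 with hq
      have hq0 : 0 ≤ q := sq_nonneg _
      have hi : (σ * (1 + γ * enorm' (Y *ᵥ x)))⁻¹ ≤ (1 + γ * enorm' (X *ᵥ x))⁻¹ :=
        inv_anti₀ hd1 (hden x)
      have hi2 : σ * (σ * (1 + γ * enorm' (Y *ᵥ x)))⁻¹ = (1 + γ * enorm' (Y *ᵥ x))⁻¹ := by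
        rw [mul_inv, ← mul_assoc, mul_inv_cancel₀ hσne, one_mul]
      calc σ * ((1 + γ * enorm' (Y *ᵥ x))⁻¹ * q)
          = (σ * σ) * ((σ * (1 + γ * enorm' (Y *ᵥ x)))⁻¹) * q := by
            rw [mul_assoc (σ * σ), ← hi2]; ring
        _ ≤ (σ * σ) * ((1 + γ * enorm' (X *ᵥ x))⁻¹) * q := by
            apply mul_le_mul_of_nonneg_right _ hq0
            exact mul_le_mul_of_nonneg_left hi (by positivity)
        _ = (1 + γ * enorm' (X *ᵥ x))⁻¹ * (σ^2 * q) := by ring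
    -- integral comparison
    have iY := integ_psi p hbdd hγ Y w
    have iX := integ_psi p hbdd hγ X u
    have hmono : σ * (∫ x, (1 + γ * enorm' (Y *ᵥ x))⁻¹ * (w ⬝ᵥ (Y *ᵥ x))^2 ∂p)
        ≤ ∫ x, (1 + γ * enorm' (X *ᵥ x))⁻¹ * (u ⬝ᵥ (X *ᵥ x))^2 ∂p := by
      rw [← integral_const_mul]
      exact integral_mono (iY.const_mul σ) iX point
    -- final contradiction
    have h1 := hXle u
    rw [hu1] at h1
    have h2 := hYge w
    rw [hw1] at h2
    have e3 : u ⬝ᵥ (X *ᵥ u) = σ * (u ⬝ᵥ (Y *ᵥ w)) := by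
      rw [hXu, dotProduct_smul, smul_eq_mul]
    rw [e3] at h1
    set IY := ∫ x, (1 + γ * enorm' (Y *ᵥ x))⁻¹ * (w ⬝ᵥ (Y *ᵥ x))^2 ∂p with hIY
    set IX := ∫ x, (1 + γ * enorm' (X *ᵥ x))⁻¹ * (u ⬝ᵥ (X *ᵥ x))^2 ∂p with hIX
    set a : ℝ := w ⬝ᵥ (Y *ᵥ w) with ha2
    set b : ℝ := u ⬝ᵥ (Y *ᵥ w) with hb2
    -- h1 : IX + lam * (σ * b) ≤ 1 ; h2 : 1 ≤ IY + lam * a ; hmono : σ * IY ≤ IX ; step3 : a ≤ b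
    have h5 : σ * (1 - lam * a) ≤ σ * IY := by
      apply mul_le_mul_of_nonneg_left _ (le_of_lt hσpos)
      linarith
    have h6 : 0 ≤ lam * σ * (b - a) := by
      apply mul_nonneg (mul_nonneg (le_of_lt hlam) (le_of_lt hσpos))
      linarith
    nlinarith [h1, h2, h5, h6, hmono]

end keylemma

/-- If `(1/2)I ⪯ FJDP(W) ⪯ 2I`, then `(1/4)W² ⪯ (W*)² ⪯ 4W²`. -/
theorem stmt18 {d : ℕ} (p : Measure (Fin d → ℝ)) [IsProbabilityMeasure p]
    (hbdd : ∃ R : ℝ, ∀ᵐ x ∂p, enorm' x ≤ R)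
    (lam γ : ℝ) (hlam : 0 < lam) (hγ : 0 ≤ γ)
    (W : Matrix (Fin d) (Fin d) ℝ) (hW : W.PosDef)
    (hlow : (FJDP p γ lam W - (1/2 : ℝ) • (1 : Matrix (Fin d) (Fin d) ℝ)).PosSemidef)
    (hupp : ((2 : ℝ) • (1 : Matrix (Fin d) (Fin d) ℝ) - FJDP p γ lam W).PosSemidef)
    (Wstar : Matrix (Fin d) (Fin d) ℝ) (hWs : Wstar.PosDef)
    (hfix : FJDP p γ lam Wstar = 1)
    (huniq : ∀ W' : Matrix (Fin d) (Fin d) ℝ, W'.PosDef → FJDP p γ lam W' = 1 → W' = Wstar) :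
    (Wstar^2 - (1/4 : ℝ) • W^2).PosSemidef
    ∧ ((4 : ℝ) • W^2 - Wstar^2).PosSemidef := by
  have hWq := FJDP_quad p hbdd lam hγ W
  have hlow' : ∀ v : Fin d → ℝ, (1/2 : ℝ) * (v ⬝ᵥ v)
      ≤ (∫ x, (1 + γ * enorm' (W *ᵥ x))⁻¹ * (v ⬝ᵥ (W *ᵥ x))^2 ∂p) + lam * (v ⬝ᵥ (W *ᵥ v)) := by
    intro v
    have h := psd_quad hlow v
    have e : v ⬝ᵥ ((FJDP p γ lam W - (1/2 : ℝ) • 1) *ᵥ v)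
        = v ⬝ᵥ ((FJDP p γ lam W) *ᵥ v) - (1/2 : ℝ) * (v ⬝ᵥ v) := by
      rw [Matrix.sub_mulVec, dotProduct_sub, Matrix.smul_mulVec, Matrix.one_mulVec,
        dotProduct_smul, smul_eq_mul]
    rw [e, hWq v] at h
    linarith
  have hupp' : ∀ v : Fin d → ℝ,
      (∫ x, (1 + γ * enorm' (W *ᵥ x))⁻¹ * (v ⬝ᵥ (W *ᵥ x))^2 ∂p) + lam * (v ⬝ᵥ (W *ᵥ v))
        ≤ 2 * (v ⬝ᵥ v) := by
    intro v
    have h := psd_quad hupp v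
    have e : v ⬝ᵥ (((2 : ℝ) • 1 - FJDP p γ lam W) *ᵥ v)
        = 2 * (v ⬝ᵥ v) - v ⬝ᵥ ((FJDP p γ lam W) *ᵥ v) := by
      rw [Matrix.sub_mulVec, dotProduct_sub, Matrix.smul_mulVec, Matrix.one_mulVec,
        dotProduct_smul, smul_eq_mul]
    rw [e, hWq v] at h
    linarith
  have hWsq : ∀ v : Fin d → ℝ,
      (∫ x, (1 + γ * enorm' (Wstar *ᵥ x))⁻¹ * (v ⬝ᵥ (Wstar *ᵥ x))^2 ∂p)
        + lam * (v ⬝ᵥ (Wstar *ᵥ v)) = v ⬝ᵥ v := by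
    intro v
    rw [← FJDP_quad p hbdd lam hγ Wstar v, hfix, Matrix.one_mulVec]
  set X0 : Matrix (Fin d) (Fin d) ℝ := (1/2 : ℝ) • W with hX0def
  set Y0 : Matrix (Fin d) (Fin d) ℝ := (2 : ℝ) • W with hY0def
  have hX0 : X0.PosDef := posdef_smul (by norm_num) hW
  have hY0 : Y0.PosDef := posdef_smul (by norm_num) hW
  have hX0le : ∀ v : Fin d → ℝ,
      (∫ x, (1 + γ * enorm' (X0 *ᵥ x))⁻¹ * (v ⬝ᵥ (X0 *ᵥ x))^2 ∂p)
        + lam * (v ⬝ᵥ (X0 *ᵥ v)) ≤ v ⬝ᵥ v := by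
    intro v
    have hpt : ∀ x : Fin d → ℝ, (1 + γ * enorm' (X0 *ᵥ x))⁻¹ * (v ⬝ᵥ (X0 *ᵥ x))^2
        ≤ (1/2 : ℝ) * ((1 + γ * enorm' (W *ᵥ x))⁻¹ * (v ⬝ᵥ (W *ᵥ x))^2) := by
      intro x
      have e1 : X0 *ᵥ x = (1/2 : ℝ) • (W *ᵥ x) := by
        rw [hX0def, Matrix.smul_mulVec]
      rw [e1, enorm'_smul, dotProduct_smul, smul_eq_mul]
      have habs : |(1/2 : ℝ)| = 1/2 := by norm_num
      rw [habs]
      set s := enorm' (W *ᵥ x) with hs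
      have hs0 : 0 ≤ s := enorm'_nonneg _
      set c := v ⬝ᵥ (W *ᵥ x) with hc
      have h1 : 0 < 1 + γ * (1/2 * s) := by nlinarith
      have h2 : 0 < 1 + γ * s := by nlinarith
      have hfrac : (1 + γ * (1/2 * s))⁻¹ * (1/4 : ℝ) ≤ (1/2 : ℝ) * (1 + γ * s)⁻¹ := by
        rw [inv_mul_eq_div, ← div_eq_mul_inv, div_le_div_iff₀ h1 h2]
        nlinarith
      have hexp : (1/2 * c)^2 = 1/4 * c^2 := by ring
      rw [hexp]
      nlinarith [mul_le_mul_of_nonneg_right hfrac (sq_nonneg c)]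
    have hIle : (∫ x, (1 + γ * enorm' (X0 *ᵥ x))⁻¹ * (v ⬝ᵥ (X0 *ᵥ x))^2 ∂p)
        ≤ (1/2 : ℝ) * (∫ x, (1 + γ * enorm' (W *ᵥ x))⁻¹ * (v ⬝ᵥ (W *ᵥ x))^2 ∂p) := by
      rw [← integral_const_mul]
      exact integral_mono (integ_psi p hbdd hγ X0 v)
        ((integ_psi p hbdd hγ W v).const_mul _) hpt
    have hlam' : lam * (v ⬝ᵥ (X0 *ᵥ v)) = (1/2 : ℝ) * (lam * (v ⬝ᵥ (W *ᵥ v))) := by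
      rw [hX0def, Matrix.smul_mulVec, dotProduct_smul, smul_eq_mul]; ring
    have hu := hupp' v
    linarith
  have hY0ge : ∀ v : Fin d → ℝ, v ⬝ᵥ v
      ≤ (∫ x, (1 + γ * enorm' (Y0 *ᵥ x))⁻¹ * (v ⬝ᵥ (Y0 *ᵥ x))^2 ∂p)
        + lam * (v ⬝ᵥ (Y0 *ᵥ v)) := by
    intro v
    have hpt : ∀ x : Fin d → ℝ,
        (2 : ℝ) * ((1 + γ * enorm' (W *ᵥ x))⁻¹ * (v ⬝ᵥ (W *ᵥ x))^2)
          ≤ (1 + γ * enorm' (Y0 *ᵥ x))⁻¹ * (v ⬝ᵥ (Y0 *ᵥ x))^2 := by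
      intro x
      have e1 : Y0 *ᵥ x = (2 : ℝ) • (W *ᵥ x) := by
        rw [hY0def, Matrix.smul_mulVec]
      rw [e1, enorm'_smul, dotProduct_smul, smul_eq_mul]
      have habs : |(2 : ℝ)| = 2 := by norm_num
      rw [habs]
      set s := enorm' (W *ᵥ x) with hs
      have hs0 : 0 ≤ s := enorm'_nonneg _
      set c := v ⬝ᵥ (W *ᵥ x) with hc
      have h1 : 0 < 1 + γ * (2 * s) := by nlinarith
      have h2 : 0 < 1 + γ * s := by nlinarith
      have hfrac : (2 : ℝ) * (1 + γ * s)⁻¹ ≤ (1 + γ * (2 * s))⁻¹ * 4 := by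
        rw [inv_mul_eq_div, ← div_eq_mul_inv, div_le_div_iff₀ h2 h1]
        nlinarith
      have hexp : (2 * c)^2 = 4 * c^2 := by ring
      rw [hexp]
      nlinarith [mul_le_mul_of_nonneg_right hfrac (sq_nonneg c)]
    have hIge : (2 : ℝ) * (∫ x, (1 + γ * enorm' (W *ᵥ x))⁻¹ * (v ⬝ᵥ (W *ᵥ x))^2 ∂p)
        ≤ ∫ x, (1 + γ * enorm' (Y0 *ᵥ x))⁻¹ * (v ⬝ᵥ (Y0 *ᵥ x))^2 ∂p := by
      rw [← integral_const_mul]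
      exact integral_mono ((integ_psi p hbdd hγ W v).const_mul _)
        (integ_psi p hbdd hγ Y0 v) hpt
    have hlam' : lam * (v ⬝ᵥ (Y0 *ᵥ v)) = (2 : ℝ) * (lam * (v ⬝ᵥ (W *ᵥ v))) := by
      rw [hY0def, Matrix.smul_mulVec, dotProduct_smul, smul_eq_mul]; ring
    have hl := hlow' v
    linarith
  have res1 := key p hbdd hlam hγ hX0 hWs hX0le (fun v => le_of_eq (hWsq v).symm)
  have res2 := key p hbdd hlam hγ hWs hY0 (fun v => le_of_eq (hWsq v)) hY0ge
  constructor
  · have e : Wstar^2 - (1/4 : ℝ) • W^2 = Wstar^2 - X0^2 := by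
      rw [hX0def, smul_pow]; norm_num
    rw [e]; exact res1
  · have e : (4 : ℝ) • W^2 - Wstar^2 = Y0^2 - Wstar^2 := by
      rw [hY0def, smul_pow]; norm_num
    rw [e]; exact res2
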